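/- For every integer r ≥ 1, the number of ordered subsets (tuples without repetition, including the empty tuple) of an r-element set equals ∑_{k=0}^{r} (r choose k)·k!, and this sum equals ⌊r!·e⌋. -/

import Mathlib

/-- For every integer `r ≥ 1`, the number of ordered subsets (tuples without repetition,
including the empty tuple) of an `r`-element set equals `∑_{k=0}^{r} (r choose k) * k!`,
and this sum equals `⌊r! * e⌋`. -/
theorem ordered_subsets_count (r : ℕ) (hr : 1 ≤ r) :
    Nat.card {l : List (Fin r) // l.Nodup} =
      ∑ k ∈ Finset.range (r + 1), r.choose k * Nat.factorial k ∧
    (∑ k ∈ Finset.range (r + 1), r.choose k * Nat.factorial k) =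
      Nat.floor ((Nat.factorial r : ℝ) * Real.exp 1) := by
  constructor
  · -- counting part
    set g : (Σ k : Fin (r + 1), (Fin k ↪ Fin r)) → {l : List (Fin r) // l.Nodup} :=
      fun p => ⟨List.ofFn p.2, List.nodup_ofFn.mpr p.2.injective⟩ with hg
    have hbij : Function.Bijective g := by
      constructor
      · rintro ⟨⟨k, hk⟩, f⟩ ⟨⟨k', hk'⟩, f'⟩ h
        simp only [hg, Subtype.mk.injEq, List.ofFn_inj'] at h
        obtain ⟨hkk, hf⟩ := Sigma.mk.inj_iff.mp h
        subst hkk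
        simpa using Function.Embedding.coe_injective (eq_of_heq hf)
      · rintro ⟨l, hl⟩
        have hlen : l.length < r + 1 := by
          have := hl.length_le_card
          simpa using Nat.lt_succ_of_le (by simpa using this)
        refine ⟨⟨⟨l.length, hlen⟩, ⟨l.get, List.nodup_iff_injective_get.mp hl⟩⟩, ?_⟩
        exact Subtype.ext (List.ofFn_get l)
    calc Nat.card {l : List (Fin r) // l.Nodup}
        = Nat.card (Σ k : Fin (r + 1), (Fin k ↪ Fin r)) :=
          (Nat.card_eq_of_bijective g hbij).symm
      _ = ∑ k ∈ Finset.range (r + 1), r.choose k * Nat.factorial k := by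
          rw [Nat.card_eq_fintype_card, Fintype.card_sigma]
          rw [Fin.sum_univ_eq_sum_range (fun k => Fintype.card (Fin k ↪ Fin r))]
          refine Finset.sum_congr rfl fun k hk => ?_
          rw [Finset.mem_range, Nat.lt_succ_iff] at hk
          rw [Fintype.card_embedding_eq, Fintype.card_fin, Fintype.card_fin,
            Nat.descFactorial_eq_factorial_mul_choose, Nat.mul_comm]
  · -- floor part
    set N := ∑ k ∈ Finset.range (r + 1), r.choose k * Nat.factorial k with hN
    set S := ∑ i ∈ Finset.range (r + 1), 1 / (Nat.factorial i : ℝ) with hS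
    have hNS : (N : ℝ) = (Nat.factorial r : ℝ) * S := by
      rw [hS, Finset.mul_sum, ← Finset.sum_range_reflect, hN]
      push_cast
      refine Finset.sum_congr rfl fun k hk => ?_
      rw [Finset.mem_range, Nat.lt_succ_iff] at hk
      have h := Nat.choose_mul_factorial_mul_factorial hk
      have hne : ((r - k).factorial : ℝ) ≠ 0 := by positivity
      field_simp
      exact_mod_cast h
    have hSle : S ≤ Real.exp 1 := by
      have := Real.sum_le_exp_of_nonneg (x := 1) zero_le_one (r + 1)
      simpa [hS] using this
    have hub : (Nat.factorial r : ℝ) * Real.exp 1 < N + 1 := by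
      have hb := Real.exp_bound' (x := 1) zero_le_one le_rfl (n := r + 1) (Nat.succ_pos r)
      simp only [one_pow] at hb
      have hfac : ((r + 1).factorial : ℝ) = (r + 1) * (Nat.factorial r : ℝ) := by
        push_cast [Nat.factorial_succ]; ring
      have hr1 : (0:ℝ) < (Nat.factorial r : ℝ) := by positivity
      simp only [one_mul] at hb
      rw [← hS] at hb
      have hterm : (Nat.factorial r : ℝ) * ((↑(r + 1) + 1) / ((r + 1).factorial * ↑(r + 1)))
          = ((r : ℝ) + 2) / (((r : ℝ) + 1) * ((r : ℝ) + 1)) := by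
        rw [hfac]
        have h1 : ((r : ℝ) + 1) ≠ 0 := by positivity
        field_simp
        push_cast
        ring
      have key : (Nat.factorial r : ℝ) * Real.exp 1 ≤
          N + (r + 2) / ((r + 1) * (r + 1)) := by
        calc (Nat.factorial r : ℝ) * Real.exp 1
            ≤ (Nat.factorial r : ℝ) * (S + (↑(r + 1) + 1) / ((r + 1).factorial * ↑(r + 1))) :=
              mul_le_mul_of_nonneg_left hb hr1.le
          _ = N + (r + 2) / ((r + 1) * (r + 1)) := by rw [mul_add, ← hNS, hterm]
      refine key.trans_lt ?_
      have : (r + 2 : ℝ) / ((r + 1) * (r + 1)) < 1 := by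
        rw [div_lt_one (by positivity)]
        have : (1:ℝ) ≤ r := by exact_mod_cast hr
        nlinarith
      linarith
    have hlb : (N : ℝ) ≤ (Nat.factorial r : ℝ) * Real.exp 1 := by
      rw [hNS]
      apply mul_le_mul_of_nonneg_left hSle (by positivity)
    symm
    rw [Nat.floor_eq_iff (by positivity)]
    exact ⟨hlb, hub⟩
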